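/- Under the same assumptions, the robust Young inequality holds: for all $X\in L^\infty$ and $Y\in L^1$, $E[XY]\le \sup_{P\in\mathcal{P}}E_P[f(\cdot,X)]+\inf_{P\in\mathcal{P}}E[\tilde f(\cdot,Y,dP/d\mathbb{P})]$, whenever both sides are well defined (the first supremum finite for some $X$ and condition (integrability of $\tilde f(\cdot,Y_P,dP/d\mathbb{P})^+$ for each $P$) hold). -/

import Mathlib

open MeasureTheory ENNReal

/-- Positive part of an extended real number, as an element of `ℝ≥0∞`. -/
noncomputable def erealPos (x : EReal) : ℝ≥0∞ :=
  if x = ⊤ then ⊤ else ENNReal.ofReal x.toReal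

/-- Integral of an `EReal`-valued function, defined as the difference of the
lower integrals of its positive and negative parts. -/
noncomputable def erealInt {Ω : Type*} [MeasurableSpace Ω] (ν : MeasureTheory.Measure Ω)
    (h : Ω → EReal) : EReal :=
  ((∫⁻ ω, erealPos (h ω) ∂ν : ℝ≥0∞) : EReal) - ((∫⁻ ω, erealPos (-(h ω)) ∂ν : ℝ≥0∞) : EReal)

section helpers
lemma erealPos_coe (r : ℝ) : erealPos (r : EReal) = ENNReal.ofReal r := by
  simp [erealPos]

lemma erealPos_neg_coe (r : ℝ) : erealPos (-(r : EReal)) = ENNReal.ofReal (-r) := by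
  rw [← EReal.coe_neg, erealPos_coe]

lemma erealPos_mono : Monotone erealPos := by
  intro x y hxy
  unfold erealPos
  rcases eq_or_ne y ⊤ with hy | hy
  · simp [hy]
  · have hx : x ≠ ⊤ := fun h => hy (top_le_iff.mp (h ▸ hxy))
    simp only [hx, hy, if_false]
    rcases eq_or_ne x ⊥ with hb | hb
    · simp [hb]
    · exact ENNReal.ofReal_le_ofReal (EReal.toReal_le_toReal hxy hb hy)

lemma measurable_erealPos : Measurable erealPos := by
  unfold erealPos
  exact Measurable.ite (MeasurableSet.singleton ⊤)
    measurable_const (ENNReal.measurable_ofReal.comp measurable_ereal_toReal)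

lemma erealInt_ne_bot {Ω : Type*} [MeasurableSpace Ω] (ν : Measure Ω) (h : Ω → EReal)
    (hneg : (∫⁻ ω, erealPos (-(h ω)) ∂ν) ≠ ⊤) : erealInt ν h ≠ ⊥ := by
  unfold erealInt
  rw [sub_eq_add_neg]
  intro hc
  rcases EReal.add_eq_bot_iff.mp hc with h1 | h1
  · exact EReal.coe_ennreal_ne_bot _ h1
  · rw [EReal.neg_eq_bot_iff, EReal.coe_ennreal_eq_top_iff] at h1
    exact hneg h1

lemma erealInt_eq_top {Ω : Type*} [MeasurableSpace Ω] (ν : Measure Ω) (h : Ω → EReal)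
    (hpos : (∫⁻ ω, erealPos (h ω) ∂ν) = ⊤)
    (hneg : (∫⁻ ω, erealPos (-(h ω)) ∂ν) ≠ ⊤) : erealInt ν h = ⊤ := by
  unfold erealInt
  rw [hpos, EReal.coe_ennreal_top]
  rw [sub_eq_add_neg, EReal.top_add_of_ne_bot]
  simp [EReal.neg_eq_bot_iff, EReal.coe_ennreal_eq_top_iff, hneg]

lemma coe_ennreal_toReal' {a : ℝ≥0∞} (ha : a ≠ ⊤) : ((a.toReal : ℝ) : EReal) = (a : EReal) := by
  rw [← EReal.toReal_coe_ennreal (x := a)]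
  exact EReal.coe_toReal (by simpa [EReal.coe_ennreal_eq_top_iff]) (EReal.coe_ennreal_ne_bot a)

lemma erealInt_congr_ae {Ω : Type*} [MeasurableSpace Ω] {ν : Measure Ω} {h g : Ω → EReal}
    (hg : h =ᵐ[ν] g) : erealInt ν h = erealInt ν g := by
  unfold erealInt
  have e1 : (fun ω => erealPos (h ω)) =ᵐ[ν] fun ω => erealPos (g ω) :=
    hg.mono fun ω hω => by simp only [hω]
  have e2 : (fun ω => erealPos (-(h ω))) =ᵐ[ν] fun ω => erealPos (-(g ω)) :=
    hg.mono fun ω hω => by simp only [hω]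
  rw [lintegral_congr_ae e1, lintegral_congr_ae e2]

lemma erealInt_coe {Ω : Type*} [MeasurableSpace Ω] (ν : Measure Ω) (h : Ω → ℝ) :
    erealInt ν (fun ω => ((h ω : ℝ) : EReal)) =
      ((∫⁻ ω, ENNReal.ofReal (h ω) ∂ν : ℝ≥0∞) : EReal)
        - ((∫⁻ ω, ENNReal.ofReal (-(h ω)) ∂ν : ℝ≥0∞) : EReal) := by
  unfold erealInt
  simp only [erealPos_coe, erealPos_neg_coe]

lemma erealInt_of_integrable {Ω : Type*} [MeasurableSpace Ω] (ν : Measure Ω) (h : Ω → ℝ)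
    (hi : Integrable h ν) :
    erealInt ν (fun ω => ((h ω : ℝ) : EReal)) = ((∫ ω, h ω ∂ν : ℝ) : EReal) := by
  rw [erealInt_coe, integral_eq_lintegral_pos_part_sub_lintegral_neg_part hi]
  have h1 : (∫⁻ ω, ENNReal.ofReal (h ω) ∂ν) ≠ ⊤ := by
    refine ne_top_of_le_ne_top hi.2.ne (lintegral_mono fun ω => ?_)
    simp [Real.nnnorm_of_nonneg, ← ofReal_norm, Real.norm_eq_abs,
      ENNReal.ofReal_le_ofReal (le_abs_self _)]
  have h2 : (∫⁻ ω, ENNReal.ofReal (-(h ω)) ∂ν) ≠ ⊤ := by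
    refine ne_top_of_le_ne_top hi.2.ne (lintegral_mono fun ω => ?_)
    simp [← ofReal_norm, Real.norm_eq_abs,
      ENNReal.ofReal_le_ofReal (neg_le_abs _)]
  rw [EReal.coe_sub]
  rw [coe_ennreal_toReal' h1, coe_ennreal_toReal' h2]



lemma lintegral_ofReal_ne_top {Ω : Type*} [MeasurableSpace Ω] {ν : Measure Ω} {b : Ω → ℝ}
    (hi : Integrable b ν) : (∫⁻ ω, ENNReal.ofReal (b ω) ∂ν) ≠ ⊤ :=
  ne_top_of_le_ne_top hi.2.ne (lintegral_mono fun ω => by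
    rw [← ofReal_norm, Real.norm_eq_abs]
    exact ENNReal.ofReal_le_ofReal (le_abs_self _))

lemma integrable_of_lintegral_parts {Ω : Type*} [MeasurableSpace Ω] {ν : Measure Ω} {h : Ω → ℝ}
    (hm : AEMeasurable h ν) (h1 : (∫⁻ ω, ENNReal.ofReal (h ω) ∂ν) ≠ ⊤)
    (h2 : (∫⁻ ω, ENNReal.ofReal (-h ω) ∂ν) ≠ ⊤) : Integrable h ν := by
  refine ⟨hm.aestronglyMeasurable, ?_⟩
  rw [hasFiniteIntegral_iff_norm]
  have e : ∀ ω, ENNReal.ofReal ‖h ω‖ = ENNReal.ofReal (h ω) + ENNReal.ofReal (-h ω) := by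
    intro ω
    rcases le_total 0 (h ω) with hw | hw
    · have hz : ENNReal.ofReal (-h ω) = 0 := ENNReal.ofReal_of_nonpos (by linarith)
      rw [Real.norm_eq_abs, abs_of_nonneg hw, hz, add_zero]
    · have hz : ENNReal.ofReal (h ω) = 0 := ENNReal.ofReal_of_nonpos hw
      rw [Real.norm_eq_abs, abs_of_nonpos hw, hz, zero_add]
  have hof : AEMeasurable (fun ω => ENNReal.ofReal (h ω)) ν :=
    ENNReal.measurable_ofReal.comp_aemeasurable hm
  rw [lintegral_congr e, lintegral_add_left' hof]
  exact lt_top_iff_ne_top.mpr (ENNReal.add_ne_top.mpr ⟨h1, h2⟩)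

lemma iSup_coe_eq_rat (φ : ℝ → ℝ) (hφ : Continuous φ) :
    (⨆ x : ℝ, ((φ x : ℝ) : EReal)) = ⨆ q : ℚ, ((φ (q : ℝ) : ℝ) : EReal) := by
  refine le_antisymm (iSup_le fun x => ?_)
    (iSup_le fun q => le_iSup (fun x : ℝ => ((φ x : ℝ) : EReal)) (q : ℝ))
  set S := ⨆ q : ℚ, ((φ (q : ℝ) : ℝ) : EReal) with hSdef
  rcases eq_or_ne S ⊤ with hS | hS
  · rw [hS]; exact le_top
  have hbot : S ≠ ⊥ := by
    intro h
    have h0 := le_iSup (fun q : ℚ => ((φ (q : ℝ) : ℝ) : EReal)) 0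
    rw [← hSdef, h, le_bot_iff] at h0
    exact EReal.coe_ne_bot _ h0
  have hSr : S = ((S.toReal : ℝ) : EReal) := (EReal.coe_toReal hS hbot).symm
  have hq : ∀ q : ℚ, φ q ≤ S.toReal := by
    intro q
    have h0 := le_iSup (fun q : ℚ => ((φ (q : ℝ) : ℝ) : EReal)) q
    rw [← hSdef, hSr] at h0
    exact_mod_cast h0
  have hx : φ x ≤ S.toReal := by
    have hcl : IsClosed {y : ℝ | φ y ≤ S.toReal} := isClosed_le hφ continuous_const
    have hsub : Set.range ((↑) : ℚ → ℝ) ⊆ {y | φ y ≤ S.toReal} := by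
      rintro _ ⟨q, rfl⟩; exact hq q
    have hcls := hcl.closure_subset_iff.mpr hsub
    have hd : closure (Set.range ((↑) : ℚ → ℝ)) = Set.univ := Rat.denseRange_cast.closure_eq
    exact hcls (hd ▸ Set.mem_univ x)
  rw [hSr]
  exact_mod_cast hx

lemma lintegral_rnDeriv_ofReal' {Ω : Type*} [MeasurableSpace Ω] (P μ : Measure Ω)
    [IsFiniteMeasure P] [SigmaFinite μ] (h : P ≪ μ) {ψ : Ω → ℝ} (hψ : Measurable ψ) :
    ∫⁻ ω, ENNReal.ofReal ((P.rnDeriv μ ω).toReal * ψ ω) ∂μ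
      = ∫⁻ ω, ENNReal.ofReal (ψ ω) ∂P := by
  have hof : AEMeasurable (fun ω => ENNReal.ofReal (ψ ω)) μ :=
    (ENNReal.measurable_ofReal.comp hψ).aemeasurable
  rw [← lintegral_rnDeriv_mul h hof]
  apply lintegral_congr_ae
  filter_upwards [Measure.rnDeriv_lt_top P μ] with ω hω
  rw [ENNReal.ofReal_mul ENNReal.toReal_nonneg, ENNReal.ofReal_toReal hω.ne]


end helpers

/-- The robust Fenchel–Young inequality:
`E[XY] ≤ sup_{P∈𝒫} E_P[f(·,X)] + inf_{P∈𝒫} E[f̃(·,Y,dP/dμ)]`. -/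


theorem robust_young_inequality {Ω : Type*} [MeasurableSpace Ω]
    (μ : Measure Ω) [IsProbabilityMeasure μ] [SigmaFinite μ]
    (PP : Set (Measure Ω)) (hne : PP.Nonempty)
    (hprob : ∀ P ∈ PP, IsProbabilityMeasure P) (hac : ∀ P ∈ PP, P ≪ μ)
    (hconvP : ∀ P ∈ PP, ∀ Q ∈ PP, ∀ a : ℝ, 0 ≤ a → a ≤ 1 →
      (ENNReal.ofReal a • P + ENNReal.ofReal (1 - a) • Q) ∈ PP)
    (f : Ω → ℝ → ℝ)
    (hmeas : Measurable (fun p : Ω × ℝ => f p.1 p.2))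
    (hconv : ∀ᵐ ω ∂μ, ConvexOn ℝ Set.univ (f ω) ∧ Continuous (f ω))
    -- primal integrability: some bounded X₀ with sup_P E_P[f(·,X₀)⁺] < ∞
    (hX0 : ∃ X₀ : Ω → ℝ, Measurable X₀ ∧ (∃ C : ℝ, ∀ ω, |X₀ ω| ≤ C) ∧
      (⨆ P : PP, ∫⁻ ω, ENNReal.ofReal (max (f ω (X₀ ω)) 0) ∂(P : Measure Ω)) < ⊤)
    -- dual integrability: for each P ∈ 𝒫 some Y_P ∈ L¹ with f̃(·,Y_P,dP/dμ)⁺ ∈ L¹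
    (hdual : ∀ P ∈ PP, ∃ Y : Ω → ℝ, Integrable Y μ ∧ ∃ g : Ω → ℝ, Integrable g μ ∧
      ∀ᵐ ω ∂μ,
        (⨆ x : ℝ, ((x * Y ω - (P.rnDeriv μ ω).toReal * f ω x : ℝ) : EReal))
          ≤ (g ω : EReal)) :
    ∀ X : Ω → ℝ, Measurable X → (∃ C : ℝ, ∀ ω, |X ω| ≤ C) →
    ∀ Y : Ω → ℝ, Integrable Y μ →
      ((∫ ω, X ω * Y ω ∂μ : ℝ) : EReal) ≤
        (⨆ P : PP, erealInt (P : Measure Ω) (fun ω => ((f ω (X ω) : ℝ) : EReal)))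
        + ⨅ P : PP, erealInt μ (fun ω =>
            ⨆ x : ℝ, ((x * Y ω - ((P : Measure Ω).rnDeriv μ ω).toReal * f ω x : ℝ) : EReal)) := by
  obtain ⟨X₀, hX₀m, ⟨C₀, hC₀⟩, hK⟩ := hX0
  intro X hXm hXb Y hY
  obtain ⟨C, hC⟩ := hXb
  haveI : Nonempty PP := hne.to_subtype
  -- abbreviations
  set S : EReal := ⨆ P : PP, erealInt (P : Measure Ω) (fun ω => ((f ω (X ω) : ℝ) : EReal))
    with hSdef
  set gg : Measure Ω → Ω → EReal := fun P ω =>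
      ⨆ x : ℝ, ((x * Y ω - (P.rnDeriv μ ω).toReal * f ω x : ℝ) : EReal) with hggdef
  have hgoalI : (⨅ P : PP, erealInt μ (fun ω =>
      ⨆ x : ℝ, ((x * Y ω - ((P : Measure Ω).rnDeriv μ ω).toReal * f ω x : ℝ) : EReal)))
      = ⨅ P : PP, erealInt μ (gg (P : Measure Ω)) := rfl
  rw [hgoalI]
  set I : EReal := ⨅ P : PP, erealInt μ (gg (P : Measure Ω)) with hIdef
  -- measurability of basic pieces
  have hfXm : Measurable (fun ω => f ω (X ω)) :=
    hmeas.comp (measurable_id.prodMk hXm)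
  have hfX₀m : Measurable (fun ω => f ω (X₀ ω)) :=
    hmeas.comp (measurable_id.prodMk hX₀m)
  obtain ⟨Y', hY'm, hYY'⟩ : ∃ Y' : Ω → ℝ, Measurable Y' ∧ Y =ᵐ[μ] Y' := by
    obtain ⟨Y', hsm, hae⟩ := hY.1
    exact ⟨Y', hsm.measurable, hae⟩
  -- facts valid for each P ∈ PP
  have hzm : ∀ P : Measure Ω, Measurable (fun ω => (P.rnDeriv μ ω).toReal) :=
    fun P => (Measure.measurable_rnDeriv P μ).ennreal_toReal
  have hznn : ∀ (P : Measure Ω) (ω : Ω), 0 ≤ (P.rnDeriv μ ω).toReal :=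
    fun P ω => ENNReal.toReal_nonneg
  -- a.e. measurability of gg P
  have hggm : ∀ P : Measure Ω, AEMeasurable (gg P) μ := by
    intro P
    refine ⟨fun ω => ⨆ q : ℚ, (((q : ℝ) * Y' ω - (P.rnDeriv μ ω).toReal * f ω q : ℝ) : EReal),
      ?_, ?_⟩
    · refine Measurable.iSup fun q => measurable_coe_real_ereal.comp ?_
      exact (measurable_const.mul hY'm).sub
        ((hzm P).mul (hmeas.comp (measurable_id.prodMk measurable_const)))
    · filter_upwards [hYY', hconv] with ω hYω hcω
      have hcont : Continuous (fun x : ℝ => x * Y ω - (P.rnDeriv μ ω).toReal * f ω x) :=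
        (continuous_id.mul continuous_const).sub (continuous_const.mul hcω.2)
      calc gg P ω
          = ⨆ q : ℚ, (((q : ℝ) * Y ω - (P.rnDeriv μ ω).toReal * f ω q : ℝ) : EReal) :=
            iSup_coe_eq_rat _ hcont
        _ = _ := by rw [hYω]
  -- transfer lemma specialized
  have hT : ∀ P ∈ PP, ∀ ψ : Ω → ℝ, Measurable ψ →
      ∫⁻ ω, ENNReal.ofReal ((P.rnDeriv μ ω).toReal * ψ ω) ∂μ
        = ∫⁻ ω, ENNReal.ofReal (ψ ω) ∂P := by
    intro P hP ψ hψ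
    haveI := hprob P hP
    exact lintegral_rnDeriv_ofReal' P μ (hac P hP) hψ
  -- finiteness of the negative part of E_P[f(·,X)]
  have hnegA : ∀ P ∈ PP,
      (∫⁻ ω, erealPos (-(((f ω (X ω) : ℝ) : EReal))) ∂P) ≠ ⊤ := by
    intro P hP
    obtain ⟨YP, hYP, g, hg, hgb⟩ := hdual P hP
    have e1 : (∫⁻ ω, erealPos (-(((f ω (X ω) : ℝ) : EReal))) ∂P)
        = ∫⁻ ω, ENNReal.ofReal (-(f ω (X ω))) ∂P := by
      apply lintegral_congr fun ω => erealPos_neg_coe _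
    have e2 : (∫⁻ ω, ENNReal.ofReal (-(f ω (X ω))) ∂P)
        = ∫⁻ ω, ENNReal.ofReal ((P.rnDeriv μ ω).toReal * -(f ω (X ω))) ∂μ :=
      (hT P hP _ hfXm.neg).symm
    rw [e1, e2]
    have hb : Integrable (fun ω => |g ω| + C * |YP ω|) μ :=
      hg.abs.add ((hYP.abs).const_mul C)
    refine ne_top_of_le_ne_top (lintegral_ofReal_ne_top hb) (lintegral_mono_ae ?_)
    filter_upwards [hgb] with ω hω
    apply ENNReal.ofReal_le_ofReal
    have h1 : ((X ω * YP ω - (P.rnDeriv μ ω).toReal * f ω (X ω) : ℝ) : EReal) ≤ (g ω : EReal) :=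
      le_trans (le_iSup (fun x : ℝ =>
        ((x * YP ω - (P.rnDeriv μ ω).toReal * f ω x : ℝ) : EReal)) (X ω)) hω
    have h2 : X ω * YP ω - (P.rnDeriv μ ω).toReal * f ω (X ω) ≤ g ω := by exact_mod_cast h1
    have h3 : -(X ω * YP ω) ≤ C * |YP ω| := by
      calc -(X ω * YP ω) ≤ |X ω * YP ω| := neg_le_abs _
        _ = |X ω| * |YP ω| := abs_mul _ _
        _ ≤ C * |YP ω| := mul_le_mul_of_nonneg_right (hC ω) (abs_nonneg _)
    have h4 : g ω ≤ |g ω| := le_abs_self _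
    nlinarith [h2, h3, h4]
  -- pointwise lower bounds for gg
  have hggbot : ∀ (P : Measure Ω) (ω : Ω), gg P ω ≠ ⊥ := by
    intro P ω h
    have h0 := le_iSup (fun x : ℝ =>
      ((x * Y ω - (P.rnDeriv μ ω).toReal * f ω x : ℝ) : EReal)) 0
    rw [hggdef] at h
    simp only at h
    rw [h, le_bot_iff] at h0
    exact EReal.coe_ne_bot _ h0
  -- uniform bound on the negative part of erealInt μ (gg P)
  set K : ℝ≥0∞ := ⨆ P : PP, ∫⁻ ω, ENNReal.ofReal (max (f ω (X₀ ω)) 0) ∂(P : Measure Ω)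
    with hKdef
  set J : ℝ≥0∞ := ∫⁻ ω, ENNReal.ofReal (C₀ * |Y ω|) ∂μ with hJdef
  have hJfin : J ≠ ⊤ := lintegral_ofReal_ne_top ((hY.abs).const_mul C₀)
  have hMfin : K + J ≠ ⊤ := ENNReal.add_ne_top.mpr ⟨hK.ne, hJfin⟩
  have hnegB : ∀ P ∈ PP, (∫⁻ ω, erealPos (-(gg P ω)) ∂μ) ≤ K + J := by
    intro P hP
    have hstep : ∀ ω, erealPos (-(gg P ω)) ≤
        ENNReal.ofReal ((P.rnDeriv μ ω).toReal * max (f ω (X₀ ω)) 0)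
          + ENNReal.ofReal (C₀ * |Y ω|) := by
      intro ω
      have h1 : ((X₀ ω * Y ω - (P.rnDeriv μ ω).toReal * f ω (X₀ ω) : ℝ) : EReal) ≤ gg P ω :=
        le_iSup (fun x : ℝ =>
          ((x * Y ω - (P.rnDeriv μ ω).toReal * f ω x : ℝ) : EReal)) (X₀ ω)
      have h2 : -(gg P ω) ≤
          (((P.rnDeriv μ ω).toReal * f ω (X₀ ω) - X₀ ω * Y ω : ℝ) : EReal) := by
        rw [show ((P.rnDeriv μ ω).toReal * f ω (X₀ ω) - X₀ ω * Y ω : ℝ)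
            = -(X₀ ω * Y ω - (P.rnDeriv μ ω).toReal * f ω (X₀ ω)) by ring, EReal.coe_neg]
        exact EReal.neg_le_neg_iff.mpr h1
      calc erealPos (-(gg P ω))
          ≤ erealPos (((P.rnDeriv μ ω).toReal * f ω (X₀ ω) - X₀ ω * Y ω : ℝ) : EReal) :=
            erealPos_mono h2
        _ = ENNReal.ofReal ((P.rnDeriv μ ω).toReal * f ω (X₀ ω) - X₀ ω * Y ω) := erealPos_coe _
        _ ≤ ENNReal.ofReal ((P.rnDeriv μ ω).toReal * max (f ω (X₀ ω)) 0 + C₀ * |Y ω|) := by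
            apply ENNReal.ofReal_le_ofReal
            have h3 : (P.rnDeriv μ ω).toReal * f ω (X₀ ω)
                ≤ (P.rnDeriv μ ω).toReal * max (f ω (X₀ ω)) 0 :=
              mul_le_mul_of_nonneg_left (le_max_left _ _) (hznn P ω)
            have h4 : -(X₀ ω * Y ω) ≤ C₀ * |Y ω| := by
              calc -(X₀ ω * Y ω) ≤ |X₀ ω * Y ω| := neg_le_abs _
                _ = |X₀ ω| * |Y ω| := abs_mul _ _
                _ ≤ C₀ * |Y ω| := mul_le_mul_of_nonneg_right (hC₀ ω) (abs_nonneg _)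
            linarith
        _ ≤ ENNReal.ofReal ((P.rnDeriv μ ω).toReal * max (f ω (X₀ ω)) 0)
              + ENNReal.ofReal (C₀ * |Y ω|) := ENNReal.ofReal_add_le
    calc (∫⁻ ω, erealPos (-(gg P ω)) ∂μ)
        ≤ ∫⁻ ω, (ENNReal.ofReal ((P.rnDeriv μ ω).toReal * max (f ω (X₀ ω)) 0)
            + ENNReal.ofReal (C₀ * |Y ω|)) ∂μ := lintegral_mono hstep
      _ = (∫⁻ ω, ENNReal.ofReal ((P.rnDeriv μ ω).toReal * max (f ω (X₀ ω)) 0) ∂μ) + J := by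
          rw [hJdef]
          exact lintegral_add_left
            ((ENNReal.measurable_ofReal.comp ((hzm P).mul (hfX₀m.max measurable_const)))) _
      _ = (∫⁻ ω, ENNReal.ofReal (max (f ω (X₀ ω)) 0) ∂P) + J := by
          rw [hT P hP _ (hfX₀m.max measurable_const)]
      _ ≤ K + J := by
          gcongr
          exact le_iSup (fun Q : PP =>
            ∫⁻ ω, ENNReal.ofReal (max (f ω (X₀ ω)) 0) ∂(Q : Measure Ω)) ⟨P, hP⟩
  -- lower bound for each erealInt μ (gg P), hence for I
  have hBlow : ∀ P ∈ PP, -(((K + J : ℝ≥0∞)) : EReal) ≤ erealInt μ (gg P) := by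
    intro P hP
    unfold erealInt
    rw [sub_eq_add_neg]
    calc -(((K + J : ℝ≥0∞)) : EReal)
        = 0 + -(((K + J : ℝ≥0∞)) : EReal) := (zero_add _).symm
      _ ≤ ((∫⁻ ω, erealPos (gg P ω) ∂μ : ℝ≥0∞) : EReal)
            + -(((∫⁻ ω, erealPos (-(gg P ω)) ∂μ : ℝ≥0∞) : EReal)) := by
          apply add_le_add (EReal.coe_ennreal_nonneg _)
          rw [EReal.neg_le_neg_iff]
          exact_mod_cast hnegB P hP
  have hIlow : -(((K + J : ℝ≥0∞)) : EReal) ≤ I :=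
    le_iInf fun P => hBlow (P : Measure Ω) P.2
  have hIbot : I ≠ ⊥ := by
    intro h
    rw [h, le_bot_iff, EReal.neg_eq_bot_iff, EReal.coe_ennreal_eq_top_iff] at hIlow
    exact hMfin hIlow
  have hSbot : S ≠ ⊥ := by
    obtain ⟨P₀, hP₀⟩ := hne
    intro h
    have hA : erealInt P₀ (fun ω => ((f ω (X ω) : ℝ) : EReal)) ≠ ⊥ :=
      erealInt_ne_bot _ _ (hnegA P₀ hP₀)
    have := le_iSup (fun P : PP =>
      erealInt (P : Measure Ω) (fun ω => ((f ω (X ω) : ℝ) : EReal))) ⟨P₀, hP₀⟩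
    rw [← hSdef, h, le_bot_iff] at this
    exact hA this
  -- main case analysis
  rcases eq_or_ne S ⊤ with hStop | hStop
  · rw [hStop, EReal.top_add_of_ne_bot hIbot]
    exact le_top
  rcases eq_or_ne I ⊤ with hItop | hItop
  · rw [hItop, EReal.add_top_of_ne_bot hSbot]
    exact le_top
  -- both finite
  have hSr : S = ((S.toReal : ℝ) : EReal) := (EReal.coe_toReal hStop hSbot).symm
  have hIr : I = ((I.toReal : ℝ) : EReal) := (EReal.coe_toReal hItop hIbot).symm
  -- integrability of X·Y
  have hw : Integrable (fun ω => X ω * Y ω) μ :=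
    hY.bdd_mul (c := C) hXm.aestronglyMeasurable (Filter.Eventually.of_forall fun ω => by
      simpa [Real.norm_eq_abs] using hC ω)
  -- for every ε > 0 we get the bound
  have hkey : ∀ ε : ℝ, 0 < ε → (∫ ω, X ω * Y ω ∂μ) ≤ S.toReal + I.toReal + ε := by
    intro ε hε
    have hlt : I < ((I.toReal + ε : ℝ) : EReal) := by
      rw [hIr]
      exact_mod_cast (by linarith : I.toReal < I.toReal + ε)
    rw [hIdef] at hlt
    obtain ⟨P, hPB⟩ := iInf_lt_iff.mp hlt
    obtain ⟨hPmem⟩ : True := trivial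
    have hP : (P : Measure Ω) ∈ PP := P.2
    set z : Ω → ℝ := fun ω => ((P : Measure Ω).rnDeriv μ ω).toReal with hzdef
    set u : Ω → ℝ := fun ω => z ω * f ω (X ω) with hudef
    have hum : Measurable u := (hzm _).mul hfXm
    have hAle : erealInt (P : Measure Ω) (fun ω => ((f ω (X ω) : ℝ) : EReal)) ≤ S :=
      le_iSup (fun Q : PP =>
        erealInt (Q : Measure Ω) (fun ω => ((f ω (X ω) : ℝ) : EReal))) P
    have hposA : (∫⁻ ω, erealPos (((f ω (X ω) : ℝ) : EReal)) ∂(P : Measure Ω)) ≠ ⊤ := by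
      intro h
      have := erealInt_eq_top (P : Measure Ω) (fun ω => ((f ω (X ω) : ℝ) : EReal))
        (by exact h) (hnegA _ hP)
      rw [this] at hAle
      exact hStop (top_le_iff.mp hAle)
    -- positive part of B_P finite
    have hnegB' : (∫⁻ ω, erealPos (-(gg (P : Measure Ω) ω)) ∂μ) ≠ ⊤ :=
      fun h => hMfin (top_le_iff.mp (h ▸ hnegB _ hP))
    have hposB : (∫⁻ ω, erealPos (gg (P : Measure Ω) ω) ∂μ) ≠ ⊤ := by
      intro h
      have := erealInt_eq_top μ (gg (P : Measure Ω)) (by exact h) hnegB'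
      rw [this] at hPB
      exact (not_top_lt hPB)
    -- gg P is a.e. real-valued
    have hggae : ∀ᵐ ω ∂μ, gg (P : Measure Ω) ω = (((gg (P : Measure Ω) ω).toReal : ℝ) : EReal) := by
      have hposm : AEMeasurable (fun ω => erealPos (gg (P : Measure Ω) ω)) μ :=
        measurable_erealPos.comp_aemeasurable (hggm _)
      filter_upwards [ae_lt_top' hposm hposB] with ω hω
      have hne : gg (P : Measure Ω) ω ≠ ⊤ := by
        intro h
        rw [h] at hω
        simp [erealPos] at hω
      exact (EReal.coe_toReal hne (hggbot _ ω)).symm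
    set v : Ω → ℝ := fun ω => (gg (P : Measure Ω) ω).toReal with hvdef
    have hvm : AEMeasurable v μ := measurable_ereal_toReal.comp_aemeasurable (hggm _)
    -- lintegral identities for v
    have hvpos : (∫⁻ ω, ENNReal.ofReal (v ω) ∂μ) = ∫⁻ ω, erealPos (gg (P : Measure Ω) ω) ∂μ := by
      apply lintegral_congr_ae
      filter_upwards [hggae] with ω hω
      rw [hvdef]
      simp only
      conv_rhs => rw [hω]
      rw [erealPos_coe]
    have hvneg : (∫⁻ ω, ENNReal.ofReal (-v ω) ∂μ)
        = ∫⁻ ω, erealPos (-(gg (P : Measure Ω) ω)) ∂μ := by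
      apply lintegral_congr_ae
      filter_upwards [hggae] with ω hω
      rw [hvdef]
      simp only
      conv_rhs => rw [hω]
      rw [erealPos_neg_coe]
    have hvint : Integrable v μ :=
      integrable_of_lintegral_parts hvm (hvpos ▸ hposB) (hvneg ▸ hnegB')
    have hBeq : erealInt μ (gg (P : Measure Ω)) = ((∫ ω, v ω ∂μ : ℝ) : EReal) := by
      rw [erealInt_congr_ae hggae]
      exact erealInt_of_integrable μ v hvint
    -- lintegral identities for u
    have ePosA : (∫⁻ ω, erealPos (((f ω (X ω) : ℝ) : EReal)) ∂(P : Measure Ω))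
        = ∫⁻ ω, ENNReal.ofReal (f ω (X ω)) ∂(P : Measure Ω) :=
      lintegral_congr fun ω => erealPos_coe _
    have eNegA : (∫⁻ ω, erealPos (-((f ω (X ω) : ℝ) : EReal)) ∂(P : Measure Ω))
        = ∫⁻ ω, ENNReal.ofReal (-f ω (X ω)) ∂(P : Measure Ω) :=
      lintegral_congr fun ω => erealPos_neg_coe _
    have hupos : (∫⁻ ω, ENNReal.ofReal (u ω) ∂μ)
        = ∫⁻ ω, ENNReal.ofReal (f ω (X ω)) ∂(P : Measure Ω) := hT _ hP _ hfXm
    have huneg : (∫⁻ ω, ENNReal.ofReal (-u ω) ∂μ)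
        = ∫⁻ ω, ENNReal.ofReal (-f ω (X ω)) ∂(P : Measure Ω) := by
      rw [← hT _ hP (fun ω => -f ω (X ω)) hfXm.neg]
      refine lintegral_congr fun ω => ?_
      show ENNReal.ofReal (-(((P : Measure Ω).rnDeriv μ ω).toReal * f ω (X ω)))
        = ENNReal.ofReal (((P : Measure Ω).rnDeriv μ ω).toReal * -f ω (X ω))
      rw [show -(((P : Measure Ω).rnDeriv μ ω).toReal * f ω (X ω))
          = ((P : Measure Ω).rnDeriv μ ω).toReal * -f ω (X ω) by ring]
    have huint : Integrable u μ :=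
      integrable_of_lintegral_parts hum.aemeasurable
        (by rw [hupos, ← ePosA]; exact hposA)
        (by rw [huneg, ← eNegA]; exact hnegA _ hP)
    have hAeq : erealInt (P : Measure Ω) (fun ω => ((f ω (X ω) : ℝ) : EReal))
        = ((∫ ω, u ω ∂μ : ℝ) : EReal) := by
      rw [erealInt_coe, ← hupos, ← huneg, ← erealInt_coe μ u]
      exact erealInt_of_integrable μ u huint
    -- pointwise inequality
    have hpt : ∀ᵐ ω ∂μ, X ω * Y ω ≤ u ω + v ω := by
      filter_upwards [hggae] with ω hω
      have h1 : ((X ω * Y ω - z ω * f ω (X ω) : ℝ) : EReal) ≤ gg (P : Measure Ω) ω :=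
        le_iSup (fun x : ℝ =>
          ((x * Y ω - ((P : Measure Ω).rnDeriv μ ω).toReal * f ω x : ℝ) : EReal)) (X ω)
      rw [hω] at h1
      have h2 : X ω * Y ω - z ω * f ω (X ω) ≤ v ω := by exact_mod_cast h1
      have : u ω = z ω * f ω (X ω) := rfl
      linarith
    -- integrate
    have hint : (∫ ω, X ω * Y ω ∂μ) ≤ (∫ ω, u ω ∂μ) + (∫ ω, v ω ∂μ) := by
      rw [← integral_add huint hvint]
      exact integral_mono_ae hw (huint.add hvint) hpt
    -- combine with the bounds on the sup and inf
    have hA_le : ((∫ ω, u ω ∂μ : ℝ) : EReal) ≤ ((S.toReal : ℝ) : EReal) := by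
      rw [← hAeq, ← hSr]; exact hAle
    have hB_le : ((∫ ω, v ω ∂μ : ℝ) : EReal) ≤ ((I.toReal + ε : ℝ) : EReal) := by
      rw [← hBeq]; exact hPB.le
    have hA_le' : (∫ ω, u ω ∂μ) ≤ S.toReal := by exact_mod_cast hA_le
    have hB_le' : (∫ ω, v ω ∂μ) ≤ I.toReal + ε := by exact_mod_cast hB_le
    linarith
  have hfinal : (∫ ω, X ω * Y ω ∂μ) ≤ S.toReal + I.toReal := by
    by_contra h
    push_neg at h
    have := hkey (((∫ ω, X ω * Y ω ∂μ) - (S.toReal + I.toReal)) / 2) (by linarith)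
    linarith
  rw [hSr, hIr, ← EReal.coe_add]
  exact_mod_cast hfinal
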